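/- Let (β_k)_{k≥1} be real numbers and (a^{(m)})_{m≥0} a compatible family of 1-forms on the diamond hierarchical graphs, with Dirichlet magnetic operators D_m. If m ≥ 2 and cos 2β_m ≠ 0, then the spectrum (set of eigenvalues) of D_m equals {1} ∪ {z ∈ ℂ : R_m(z) is an eigenvalue of D_{m−1}}; moreover the spectrum of D_1 is {1}. -/

import Mathlib

open Complex

abbrev DEdge (m : ℕ) : Type := Fin m → Fin 4

def DVtx : ℕ → Type
  | 0 => Bool
  | m + 1 => DVtx m ⊕ (DEdge m × Bool)

instance DVtx.instFintype : (m : ℕ) → Fintype (DVtx m)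
  | 0 => inferInstanceAs (Fintype Bool)
  | m + 1 =>
      letI := DVtx.instFintype m
      inferInstanceAs (Fintype (DVtx m ⊕ (DEdge m × Bool)))

instance DVtx.instDecidableEq : (m : ℕ) → DecidableEq (DVtx m)
  | 0 => inferInstanceAs (DecidableEq Bool)
  | m + 1 =>
      letI := DVtx.instDecidableEq m
      inferInstanceAs (DecidableEq (DVtx m ⊕ (DEdge m × Bool)))

/-- The inclusion of scale-`m` vertices into scale-`m+1` vertices. -/
def oldV {m : ℕ} (x : DVtx m) : DVtx (m + 1) := Sum.inl x

/-- The new vertices at scale `m+1`: each scale-`m` edge gives two new vertices. -/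
def newV {m : ℕ} (p : DEdge m × Bool) : DVtx (m + 1) := Sum.inr p

/-- Endpoints (source, target) of each canonically directed edge. Each edge `w` of `G_m`
with endpoints `x = src w`, `y = tgt w` is replaced in `G_{m+1}` by the 4-cycle
`x–u–y–v–x` with `u = (w,false)`, `v = (w,true)`, its four edges directed
`x→u`, `u→y`, `y→v`, `v→x`. -/
def dEnds : (m : ℕ) → DEdge m → DVtx m × DVtx m
  | 0, _ => (false, true)
  | m + 1, w =>
      let p : DEdge m := fun i => w i.castSucc
      let x := (dEnds m p).1
      let y := (dEnds m p).2
      if w (Fin.last m) = 0 then (oldV x, newV (p, false))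
      else if w (Fin.last m) = 1 then (newV (p, false), oldV y)
      else if w (Fin.last m) = 2 then (oldV y, newV (p, true))
      else (newV (p, true), oldV x)

def dsrc (m : ℕ) (e : DEdge m) : DVtx m := (dEnds m e).1
def dtgt (m : ℕ) (e : DEdge m) : DVtx m := (dEnds m e).2

/-- Degree of a vertex in `G_m`. -/
def ddeg (m : ℕ) (x : DVtx m) : ℕ :=
  (Finset.univ.filter fun e : DEdge m => dsrc m e = x).card +
  (Finset.univ.filter fun e : DEdge m => dtgt m e = x).card

/-- The magnetic operator `M^a_m` associated to a 1-form `a` (recorded on the canonical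
orientations of the edges; the reversed edge carries `-a e`). -/
noncomputable def magOp (m : ℕ) (a : DEdge m → ℝ) (f : DVtx m → ℂ) (x : DVtx m) : ℂ :=
  (ddeg m x : ℂ)⁻¹ *
    ((∑ e : DEdge m, if dsrc m e = x then f x - Complex.exp (Complex.I * a e) * f (dtgt m e) else 0) +
     (∑ e : DEdge m, if dtgt m e = x then f x - Complex.exp (-(Complex.I * a e)) * f (dsrc m e) else 0))

/-- The two original vertices `V_0` viewed inside `V_m`. -/
def base : (m : ℕ) → Bool → DVtx m
  | 0, b => b
  | m + 1, b => oldV (base m b)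

/-- Matrix of the magnetic operator `M^a_m`. -/
noncomputable def magMat (m : ℕ) (a : DEdge m → ℝ) : Matrix (DVtx m) (DVtx m) ℂ :=
  Matrix.of fun x y => magOp m a (fun v => if v = y then 1 else 0) x

/-- The Dirichlet magnetic operator: submatrix indexed by `V_m \ V_0`. -/
noncomputable def dirMat (m : ℕ) (a : DEdge m → ℝ) :
    Matrix {x : DVtx m // ∀ b, x ≠ base m b} {x : DVtx m // ∀ b, x ≠ base m b} ℂ :=
  (magMat m a).submatrix Subtype.val Subtype.val

/-- Flux of a 1-form around the scale-`(m+1)` cell replacing edge `w` of `G_m`. -/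
noncomputable def cellFlux {m : ℕ} (a : DEdge (m + 1) → ℝ) (w : DEdge m) : ℝ :=
  a (Fin.snoc w 0) + a (Fin.snoc w 1) + a (Fin.snoc w 2) + a (Fin.snoc w 3)

/-- The trace of a 1-form on `G_{m+1}` to `G_m`:
`a'(e_{xy}) = (1/2)(a(e_{xu}) + a(e_{uy}) + a(e_{xv}) + a(e_{vy}))`. -/
noncomputable def traceForm {m : ℕ} (a : DEdge (m + 1) → ℝ) : DEdge m → ℝ :=
  fun w => (1 / 2) * (a (Fin.snoc w 0) + a (Fin.snoc w 1) - a (Fin.snoc w 2) - a (Fin.snoc w 3))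

/-- A compatible family of 1-forms: flux `±4β_m` through every scale-`m` cell, and each
form traces to the previous one. -/
def Compatible (βs : ℕ → ℝ) (a : (m : ℕ) → DEdge m → ℝ) : Prop :=
  ∀ (k : ℕ) (w : DEdge k),
    (cellFlux (a (k + 1)) w = 4 * βs (k + 1) ∨ cellFlux (a (k + 1)) w = -(4 * βs (k + 1))) ∧
    traceForm (a (k + 1)) w = a k w


section Comb
variable {m : ℕ}

lemma snoc_inj {w w' : DEdge m} {j j' : Fin 4}
    (h : (Fin.snoc w j : Fin (m+1) → Fin 4) = Fin.snoc w' j') : w = w' ∧ j = j' := by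
  constructor
  · funext i
    have := congrFun h i.castSucc
    simpa using this
  · have := congrFun h (Fin.last m)
    simpa using this

lemma dEnds_snoc (w : DEdge m) (j : Fin 4) :
    dEnds (m+1) (Fin.snoc w j) =
      if j = 0 then (oldV (dsrc m w), newV (w, false))
      else if j = 1 then (newV (w, false), oldV (dtgt m w))
      else if j = 2 then (oldV (dtgt m w), newV (w, true))
      else (newV (w, true), oldV (dsrc m w)) := by
  have hp : (fun i : Fin m => (Fin.snoc w j : Fin (m+1) → Fin 4) i.castSucc) = w := by
    funext i; simp
  show dEnds (m+1) (Fin.snoc w j) = _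
  rw [dEnds]
  simp only [hp, Fin.snoc_last]
  rfl

lemma ends0 (w : DEdge m) : dsrc (m+1) (Fin.snoc w 0) = oldV (dsrc m w) ∧
    dtgt (m+1) (Fin.snoc w 0) = newV (w, false) := by
  unfold dsrc dtgt; rw [dEnds_snoc]; exact ⟨rfl, rfl⟩
lemma ends1 (w : DEdge m) : dsrc (m+1) (Fin.snoc w 1) = newV (w, false) ∧
    dtgt (m+1) (Fin.snoc w 1) = oldV (dtgt m w) := by
  unfold dsrc dtgt; rw [dEnds_snoc]; exact ⟨rfl, rfl⟩
lemma ends2 (w : DEdge m) : dsrc (m+1) (Fin.snoc w 2) = oldV (dtgt m w) ∧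
    dtgt (m+1) (Fin.snoc w 2) = newV (w, true) := by
  unfold dsrc dtgt; rw [dEnds_snoc]; exact ⟨rfl, rfl⟩
lemma ends3 (w : DEdge m) : dsrc (m+1) (Fin.snoc w 3) = newV (w, true) ∧
    dtgt (m+1) (Fin.snoc w 3) = oldV (dsrc m w) := by
  unfold dsrc dtgt; rw [dEnds_snoc]; exact ⟨rfl, rfl⟩

/-- decompose a sum over scale-(m+1) edges into cells -/
lemma sum_edges {M : Type*} [AddCommMonoid M] (g : DEdge (m+1) → M) :
    ∑ e : DEdge (m+1), g e =
      ∑ w : DEdge m, (g (Fin.snoc w 0) + g (Fin.snoc w 1) + g (Fin.snoc w 2) + g (Fin.snoc w 3)) := by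
  have h := Equiv.sum_comp (Fin.snocEquiv (fun _ : Fin (m+1) => Fin 4)) g
  rw [← h, Fintype.sum_prod_type, Finset.sum_comm]
  refine Finset.sum_congr rfl fun w _ => ?_
  rw [Fin.sum_univ_four]
  rfl

lemma base_succ (b : Bool) : base (m+1) b = oldV (base m b) := rfl

lemma oldV_ne_newV (x : DVtx m) (p : DEdge m × Bool) : oldV x ≠ newV p := by
  simp [oldV, newV]
  exact Sum.inl_ne_inr

lemma newV_ne_base (p : DEdge m × Bool) (b : Bool) : newV p ≠ base (m+1) b := by
  rw [base_succ]; simp [oldV, newV]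
  exact Sum.inr_ne_inl

lemma oldV_inj {x y : DVtx m} (h : oldV x = oldV y) : x = y := Sum.inl.inj h
lemma newV_inj {p q : DEdge m × Bool} (h : newV p = newV q) : p = q := Sum.inr.inj h

/-- number of edges at each vertex, i.e. sums of indicators. -/
lemma ddeg_eq_sum (x : DVtx m) :
    (ddeg m x : ℂ) = ∑ w : DEdge m,
      ((if dsrc m w = x then (1:ℂ) else 0) + (if dtgt m w = x then (1:ℂ) else 0)) := by
  unfold ddeg
  rw [Finset.card_filter, Finset.card_filter]
  push_cast
  rw [← Finset.sum_add_distrib]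

lemma ddeg_eq_sum_nat (x : DVtx m) :
    ddeg m x = ∑ w : DEdge m,
      ((if dsrc m w = x then 1 else 0) + (if dtgt m w = x then 1 else 0)) := by
  unfold ddeg
  rw [Finset.sum_add_distrib, Finset.card_filter, Finset.card_filter]

lemma ddeg_old (x : DVtx m) : ddeg (m+1) (oldV x) = 2 * ddeg m x := by
  rw [ddeg_eq_sum_nat, ddeg_eq_sum_nat, sum_edges, Finset.mul_sum]
  have h0 := ends0 (m := m); have h1 := ends1 (m := m)
  have h2 := ends2 (m := m); have h3 := ends3 (m := m)
  refine Finset.sum_congr rfl fun w _ => ?_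
  rw [(h0 w).1, (h0 w).2, (h1 w).1, (h1 w).2, (h2 w).1, (h2 w).2, (h3 w).1, (h3 w).2]
  have e1 : (oldV (dsrc m w) = oldV x) ↔ dsrc m w = x :=
    ⟨fun h => Sum.inl.inj h, fun h => by rw [h]⟩
  have e2 : (oldV (dtgt m w) = oldV x) ↔ dtgt m w = x :=
    ⟨fun h => Sum.inl.inj h, fun h => by rw [h]⟩
  have e3 : ∀ p, (newV p = oldV x) ↔ False := fun p => ⟨fun h => Sum.inr_ne_inl h, False.elim⟩
  by_cases hs : dsrc m w = x <;> by_cases ht : dtgt m w = x <;>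
    simp [e1, e2, e3, hs, ht]

lemma ddeg_new (p : DEdge m × Bool) : ddeg (m+1) (newV p) = 2 := by
  obtain ⟨w, b⟩ := p
  rw [ddeg_eq_sum_nat, sum_edges]
  have h0 := ends0 (m := m); have h1 := ends1 (m := m)
  have h2 := ends2 (m := m); have h3 := ends3 (m := m)
  have key : ∀ w' : DEdge m,
      ((((if dsrc (m+1) (Fin.snoc w' 0) = newV (w,b) then 1 else 0) +
         (if dtgt (m+1) (Fin.snoc w' 0) = newV (w,b) then 1 else 0)) +
        ((if dsrc (m+1) (Fin.snoc w' 1) = newV (w,b) then 1 else 0) +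
         (if dtgt (m+1) (Fin.snoc w' 1) = newV (w,b) then 1 else 0)) +
        ((if dsrc (m+1) (Fin.snoc w' 2) = newV (w,b) then 1 else 0) +
         (if dtgt (m+1) (Fin.snoc w' 2) = newV (w,b) then 1 else 0)) +
        ((if dsrc (m+1) (Fin.snoc w' 3) = newV (w,b) then 1 else 0) +
         (if dtgt (m+1) (Fin.snoc w' 3) = newV (w,b) then 1 else 0))) : ℕ)
      = if w' = w then 2 else 0 := by
    intro w'
    rw [(h0 w').1, (h0 w').2, (h1 w').1, (h1 w').2, (h2 w').1, (h2 w').2, (h3 w').1, (h3 w').2]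
    by_cases hw : w' = w
    · subst hw
      have hne1 : newV (w', true) ≠ newV (w', false) := fun hc => by
        simpa using congrArg Prod.snd (Sum.inr.inj hc)
      have hne2 : newV (w', false) ≠ newV (w', true) := fun hc => by
        simpa using congrArg Prod.snd (Sum.inr.inj hc)
      cases b <;> simp [hne1, hne2, oldV_ne_newV]
    · have : ∀ b' : Bool, newV (w', b') ≠ newV (w, b) := by
        intro b' hc
        exact hw (congrArg Prod.fst (Sum.inr.inj hc))
      simp [this, hw, oldV_ne_newV]
  rw [Finset.sum_congr rfl fun w' _ => key w']
  simp

lemma ddeg_pos : ∀ (m : ℕ) (x : DVtx m), 0 < ddeg m x := by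
  intro m
  induction m with
  | zero =>
    intro x
    have : ∀ e : DEdge 0, dsrc 0 e = false ∧ dtgt 0 e = true := by
      intro e; exact ⟨rfl, rfl⟩
    match x with
    | false =>
      unfold ddeg
      refine Nat.lt_of_lt_of_le (Finset.card_pos.2 ⟨default, ?_⟩) (Nat.le_add_right _ _)
      simp only [Finset.mem_filter, Finset.mem_univ, true_and]
      exact (this default).1
    | true =>
      unfold ddeg
      refine Nat.lt_of_lt_of_le (Finset.card_pos.2 ⟨default, ?_⟩) (Nat.le_add_left _ _)
      simp only [Finset.mem_filter, Finset.mem_univ, true_and]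
      exact (this default).2
  | succ n ih =>
    intro x
    match x with
    | Sum.inl y => have := ih y; rw [show (Sum.inl y : DVtx (n+1)) = oldV y from rfl, ddeg_old]; omega
    | Sum.inr p =>
      rw [show (Sum.inr p : DVtx (n+1)) = newV p from rfl, ddeg_new]
      omega

end Comb

section Bridge
variable {m : ℕ} (a : DEdge m → ℝ)

lemma sum_delta_mul (F : DVtx m → ℂ) (u : DVtx m) :
    ∑ y : DVtx m, (if u = y then (1:ℂ) else 0) * F y = F u := by
  simp [ite_mul, Finset.sum_ite_eq]

lemma mulVec_magMat (F : DVtx m → ℂ) (x : DVtx m) :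
    (magMat m a).mulVec F x = magOp m a F x := by
  have step1 : (magMat m a).mulVec F x
      = (ddeg m x : ℂ)⁻¹ * ∑ y : DVtx m,
        (((∑ e : DEdge m, if dsrc m e = x then
            (if x = y then (1:ℂ) else 0) - Complex.exp (Complex.I * a e) * (if dtgt m e = y then 1 else 0) else 0) +
          (∑ e : DEdge m, if dtgt m e = x then
            (if x = y then (1:ℂ) else 0) - Complex.exp (-(Complex.I * a e)) * (if dsrc m e = y then 1 else 0) else 0)) * F y) := by
    unfold Matrix.mulVec dotProduct magMat magOp
    simp only [Matrix.of_apply]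
    rw [Finset.mul_sum]
    exact Finset.sum_congr rfl fun y _ => by ring
  rw [step1]
  unfold magOp
  congr 1
  rw [Finset.sum_congr rfl (fun y _ => add_mul _ _ (F y)), Finset.sum_add_distrib]
  congr 1
  · rw [Finset.sum_congr rfl (fun y (_ : y ∈ Finset.univ) => Finset.sum_mul _ _ (F y)),
      Finset.sum_comm]
    refine Finset.sum_congr rfl fun e _ => ?_
    by_cases h : dsrc m e = x
    · simp only [if_pos h]
      rw [Finset.sum_congr rfl (fun y (_ : y ∈ Finset.univ) => sub_mul _ _ (F y)),
        Finset.sum_sub_distrib, sum_delta_mul]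
      congr 1
      rw [Finset.sum_congr rfl (fun y (_ : y ∈ Finset.univ) => mul_assoc _ _ (F y)),
        ← Finset.mul_sum, sum_delta_mul]
    · simp [if_neg h]
  · rw [Finset.sum_congr rfl (fun y (_ : y ∈ Finset.univ) => Finset.sum_mul _ _ (F y)),
      Finset.sum_comm]
    refine Finset.sum_congr rfl fun e _ => ?_
    by_cases h : dtgt m e = x
    · simp only [if_pos h]
      rw [Finset.sum_congr rfl (fun y (_ : y ∈ Finset.univ) => sub_mul _ _ (F y)),
        Finset.sum_sub_distrib, sum_delta_mul]
      congr 1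
      rw [Finset.sum_congr rfl (fun y (_ : y ∈ Finset.univ) => mul_assoc _ _ (F y)),
        ← Finset.mul_sum, sum_delta_mul]
    · simp [if_neg h]

lemma dirMat_mulVec_eq (F : DVtx m → ℂ) (hF : ∀ b, F (base m b) = 0)
    (x : DVtx m) (hx : ∀ b, x ≠ base m b) :
    (dirMat m a).mulVec (fun y : {v : DVtx m // ∀ b, v ≠ base m b} => F y.1) ⟨x, hx⟩
      = magOp m a F x := by
  rw [← mulVec_magMat]
  show (∑ y : {v : DVtx m // ∀ b, v ≠ base m b}, magMat m a x y.1 * F y.1)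
      = ∑ y : DVtx m, magMat m a x y * F y
  rw [← Finset.sum_subtype (Finset.univ.filter fun v : DVtx m => ∀ b, v ≠ base m b)
    (fun v => by simp) (fun y => magMat m a x y * F y)]
  refine Finset.sum_filter_of_ne ?_
  intro y _ hy
  intro b hc
  exact hy (by rw [hc, hF b, mul_zero])

/-- the eigenvalue condition in terms of functions on all of `V_m` vanishing on `V_0`. -/
lemma eig_iff (z : ℂ) :
    Module.End.HasEigenvalue (Matrix.toLin' (dirMat m a)) z ↔
      ∃ F : DVtx m → ℂ, F ≠ 0 ∧ (∀ b, F (base m b) = 0) ∧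
        ∀ x : DVtx m, (∀ b, x ≠ base m b) → magOp m a F x = z * F x := by
  rw [Module.End.hasEigenvalue_iff]
  constructor
  · intro h
    obtain ⟨f, hf, hf0⟩ := Submodule.exists_mem_ne_zero_of_ne_bot h
    have hf' : Matrix.toLin' (dirMat m a) f = z • f := Module.End.mem_eigenspace_iff.1 hf
    rw [Matrix.toLin'_apply] at hf'
    classical
    refine ⟨fun v => if h : ∀ b, v ≠ base m b then f ⟨v, h⟩ else 0, ?_, ?_, ?_⟩
    · intro hc
      apply hf0
      funext y
      have := congrFun hc y.1
      simpa [y.2] using this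
    · intro b
      have hnb : ¬ ∀ b', base m b ≠ base m b' := by push_neg; exact ⟨b, rfl⟩
      simp only [hnb, dif_neg, not_false_iff]
    · intro x hx
      rw [← dirMat_mulVec_eq a _ (fun b => by rw [dif_neg]; push_neg; exact ⟨b, rfl⟩) x hx]
      have hfe : (fun y : {v : DVtx m // ∀ b, v ≠ base m b} =>
          (fun v => if h : ∀ b, v ≠ base m b then f ⟨v, h⟩ else 0) y.1) = f := by
        funext y
        simp only [dif_pos y.2]
      rw [hfe, hf']
      simp only [Pi.smul_apply, smul_eq_mul, dif_pos hx]
  · rintro ⟨F, hF0, hFb, hFe⟩ hbot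
    set f : {v : DVtx m // ∀ b, v ≠ base m b} → ℂ := fun y => F y.1 with hfdef
    have hf : f ∈ Module.End.eigenspace (Matrix.toLin' (dirMat m a)) z := by
      rw [Module.End.mem_eigenspace_iff, Matrix.toLin'_apply]
      funext y
      have := dirMat_mulVec_eq a F hFb y.1 y.2
      rw [show ((⟨y.1, y.2⟩ : {v : DVtx m // ∀ b, v ≠ base m b}) = y) from Subtype.ext rfl] at this
      calc (dirMat m a).mulVec f y = magOp m a F y.1 := this
        _ = z * F y.1 := hFe y.1 y.2
        _ = (z • f) y := by simp [hfdef]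
    rw [hbot, Submodule.mem_bot] at hf
    apply hF0
    funext v
    by_cases hv : ∀ b, v ≠ base m b
    · have := congrFun hf ⟨v, hv⟩
      simpa [hfdef] using this
    · push_neg at hv
      obtain ⟨b, hb⟩ := hv
      rw [hb, hFb b]
      rfl

end Bridge

section Cells
variable {m : ℕ}

lemma dsrc_snoc0 (w : DEdge m) : dsrc (m+1) (Fin.snoc w 0) = oldV (dsrc m w) := (ends0 w).1
lemma dtgt_snoc0 (w : DEdge m) : dtgt (m+1) (Fin.snoc w 0) = newV (w, false) := (ends0 w).2
lemma dsrc_snoc1 (w : DEdge m) : dsrc (m+1) (Fin.snoc w 1) = newV (w, false) := (ends1 w).1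
lemma dtgt_snoc1 (w : DEdge m) : dtgt (m+1) (Fin.snoc w 1) = oldV (dtgt m w) := (ends1 w).2
lemma dsrc_snoc2 (w : DEdge m) : dsrc (m+1) (Fin.snoc w 2) = oldV (dtgt m w) := (ends2 w).1
lemma dtgt_snoc2 (w : DEdge m) : dtgt (m+1) (Fin.snoc w 2) = newV (w, true) := (ends2 w).2
lemma dsrc_snoc3 (w : DEdge m) : dsrc (m+1) (Fin.snoc w 3) = newV (w, true) := (ends3 w).1
lemma dtgt_snoc3 (w : DEdge m) : dtgt (m+1) (Fin.snoc w 3) = oldV (dsrc m w) := (ends3 w).2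

lemma oldV_eq_oldV_iff {x y : DVtx m} : oldV x = oldV y ↔ x = y :=
  ⟨fun h => Sum.inl.inj h, fun h => by rw [h]⟩
lemma newV_eq_newV_iff {p q : DEdge m × Bool} : newV p = newV q ↔ p = q :=
  ⟨fun h => Sum.inr.inj h, fun h => by rw [h]⟩
lemma oldV_eq_newV_iff {x : DVtx m} {p : DEdge m × Bool} : oldV x = newV p ↔ False :=
  ⟨fun h => by exact Sum.inl_ne_inr h, False.elim⟩
lemma newV_eq_oldV_iff {x : DVtx m} {p : DEdge m × Bool} : newV p = oldV x ↔ False :=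
  ⟨fun h => by exact Sum.inr_ne_inl h, False.elim⟩

lemma magOp_newF (A : DEdge (m+1) → ℝ) (F : DVtx (m+1) → ℂ) (w : DEdge m) :
    magOp (m+1) A F (newV (w, false)) = F (newV (w, false)) - (1/2) *
      (Complex.exp (Complex.I * A (Fin.snoc w 1)) * F (oldV (dtgt m w)) +
       Complex.exp (-(Complex.I * A (Fin.snoc w 0))) * F (oldV (dsrc m w))) := by
  unfold magOp
  rw [ddeg_new, sum_edges (fun e => if dsrc (m+1) e = newV (w, false) then
      F (newV (w, false)) - Complex.exp (Complex.I * A e) * F (dtgt (m+1) e) else 0),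
    sum_edges (fun e => if dtgt (m+1) e = newV (w, false) then
      F (newV (w, false)) - Complex.exp (-(Complex.I * A e)) * F (dsrc (m+1) e) else 0)]
  simp only [dsrc_snoc0, dsrc_snoc1, dsrc_snoc2, dsrc_snoc3,
    dtgt_snoc0, dtgt_snoc1, dtgt_snoc2, dtgt_snoc3,
    oldV_eq_newV_iff, newV_eq_newV_iff, Prod.mk.injEq, if_false,
    and_true, and_false, Bool.false_eq_true, Bool.true_eq_false]
  simp only [add_zero, zero_add, Finset.sum_ite_eq' Finset.univ w, Finset.mem_univ, if_true]
  push_cast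
  ring

lemma magOp_newT (A : DEdge (m+1) → ℝ) (F : DVtx (m+1) → ℂ) (w : DEdge m) :
    magOp (m+1) A F (newV (w, true)) = F (newV (w, true)) - (1/2) *
      (Complex.exp (Complex.I * A (Fin.snoc w 3)) * F (oldV (dsrc m w)) +
       Complex.exp (-(Complex.I * A (Fin.snoc w 2))) * F (oldV (dtgt m w))) := by
  unfold magOp
  rw [ddeg_new, sum_edges (fun e => if dsrc (m+1) e = newV (w, true) then
      F (newV (w, true)) - Complex.exp (Complex.I * A e) * F (dtgt (m+1) e) else 0),
    sum_edges (fun e => if dtgt (m+1) e = newV (w, true) then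
      F (newV (w, true)) - Complex.exp (-(Complex.I * A e)) * F (dsrc (m+1) e) else 0)]
  simp only [dsrc_snoc0, dsrc_snoc1, dsrc_snoc2, dsrc_snoc3,
    dtgt_snoc0, dtgt_snoc1, dtgt_snoc2, dtgt_snoc3,
    oldV_eq_newV_iff, newV_eq_newV_iff, Prod.mk.injEq, if_false,
    and_true, and_false, Bool.false_eq_true, Bool.true_eq_false]
  simp only [add_zero, zero_add, Finset.sum_ite_eq' Finset.univ w, Finset.mem_univ, if_true]
  push_cast
  ring

lemma magOp_old_raw (A : DEdge (m+1) → ℝ) (F : DVtx (m+1) → ℂ) (x : DVtx m) :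
    magOp (m+1) A F (oldV x) = ((2 * (ddeg m x : ℂ)))⁻¹ *
      ∑ w : DEdge m,
        ((if dsrc m w = x then
            (2 * F (oldV x) - Complex.exp (Complex.I * A (Fin.snoc w 0)) * F (newV (w, false))
              - Complex.exp (-(Complex.I * A (Fin.snoc w 3))) * F (newV (w, true))) else 0) +
         (if dtgt m w = x then
            (2 * F (oldV x) - Complex.exp (-(Complex.I * A (Fin.snoc w 1))) * F (newV (w, false))
              - Complex.exp (Complex.I * A (Fin.snoc w 2)) * F (newV (w, true))) else 0)) := by
  unfold magOp
  rw [sum_edges (fun e => if dsrc (m+1) e = oldV x then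
      F (oldV x) - Complex.exp (Complex.I * A e) * F (dtgt (m+1) e) else 0),
    sum_edges (fun e => if dtgt (m+1) e = oldV x then
      F (oldV x) - Complex.exp (-(Complex.I * A e)) * F (dsrc (m+1) e) else 0),
    ddeg_old, ← Finset.sum_add_distrib]
  have hc : ((2 * ddeg m x : ℕ) : ℂ) = 2 * (ddeg m x : ℂ) := by push_cast; ring
  rw [hc]
  congr 1
  refine Finset.sum_congr rfl fun w _ => ?_
  simp only [dsrc_snoc0, dsrc_snoc1, dsrc_snoc2, dsrc_snoc3,
    dtgt_snoc0, dtgt_snoc1, dtgt_snoc2, dtgt_snoc3,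
    oldV_eq_oldV_iff, newV_eq_oldV_iff, if_false]
  by_cases hs : dsrc m w = x <;> by_cases ht : dtgt m w = x <;>
    simp only [hs, ht, if_true, if_false] <;> ring

section ExpId

lemma expI_mul (s t : ℝ) :
    Complex.exp (Complex.I * (s:ℝ)) * Complex.exp (Complex.I * (t:ℝ))
      = Complex.exp (Complex.I * ((s+t : ℝ) : ℂ)) := by
  rw [← Complex.exp_add]
  push_cast
  ring_nf

lemma expI_neg (s : ℝ) :
    Complex.exp (-(Complex.I * (s:ℝ))) = Complex.exp (Complex.I * ((-s : ℝ) : ℂ)) := by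
  push_cast
  ring_nf

lemma two_cos_exp (r : ℝ) :
    Complex.exp (Complex.I * (r:ℝ)) + Complex.exp (-(Complex.I * (r:ℝ)))
      = 2 * ((Real.cos r : ℝ) : ℂ) := by
  rw [expI_neg, mul_comm Complex.I ((r:ℝ):ℂ), mul_comm Complex.I (((-r : ℝ):ℝ):ℂ),
    Complex.exp_mul_I, Complex.exp_mul_I]
  push_cast
  rw [Complex.cos_neg, Complex.sin_neg]
  ring

/-- Key cell identity: if `p + q = ±4β` and `(p - q)/2 = t` then
`exp(I p) + exp(-I q) = 2 cos(2β) exp(I t)`. -/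
lemma cell_exp (p q β t : ℝ) (hflux : p + q = 4 * β ∨ p + q = -(4 * β))
    (htr : (1/2) * (p - q) = t) :
    Complex.exp (Complex.I * (p:ℝ)) + Complex.exp (-(Complex.I * (q:ℝ)))
      = 2 * ((Real.cos (2*β) : ℝ) : ℂ) * Complex.exp (Complex.I * (t:ℝ)) := by
  set c : ℝ := (p + q) / 2 with hc
  have hp : p = t + c := by rw [hc]; linarith
  have hq : q = c - t := by rw [hc]; linarith
  have hcos : Real.cos c = Real.cos (2*β) := by
    rcases hflux with h | h
    · rw [hc, h, show 4*β/2 = 2*β by ring]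
    · rw [hc, h, show -(4*β)/2 = -(2*β) by ring, Real.cos_neg]
  calc Complex.exp (Complex.I * (p:ℝ)) + Complex.exp (-(Complex.I * (q:ℝ)))
      = Complex.exp (Complex.I * (t:ℝ)) * Complex.exp (Complex.I * (c:ℝ))
        + Complex.exp (Complex.I * (t:ℝ)) * Complex.exp (Complex.I * ((-c : ℝ):ℂ)) := by
        rw [expI_mul, expI_mul, ← hp, expI_neg, show (-q : ℝ) = t + -c from by linarith]
    _ = Complex.exp (Complex.I * (t:ℝ)) *
          (Complex.exp (Complex.I * (c:ℝ)) + Complex.exp (-(Complex.I * (c:ℝ)))) := by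
        rw [expI_neg]; ring
    _ = 2 * ((Real.cos (2*β) : ℝ) : ℂ) * Complex.exp (Complex.I * (t:ℝ)) := by
        rw [two_cos_exp, hcos]; ring

lemma cell_exp' (p q β t : ℝ) (hflux : p + q = 4 * β ∨ p + q = -(4 * β))
    (htr : (1/2) * (p - q) = t) :
    Complex.exp (-(Complex.I * (p:ℝ))) + Complex.exp (Complex.I * (q:ℝ))
      = 2 * ((Real.cos (2*β) : ℝ) : ℂ) * Complex.exp (-(Complex.I * (t:ℝ))) := by
  have hflux' : q + p = 4 * β ∨ q + p = -(4 * β) := by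
    rcases hflux with h | h
    · exact Or.inl (by linarith)
    · exact Or.inr (by linarith)
  have := cell_exp q p β (-t) hflux' (by linarith)
  rw [← expI_neg] at this
  rw [add_comm (Complex.exp (Complex.I * (q:ℝ)))] at this
  exact this

end ExpId

section Transfer
variable {n : ℕ}

lemma expI_cancel (s : ℝ) :
    Complex.exp (Complex.I * (s:ℝ)) * Complex.exp (-(Complex.I * (s:ℝ))) = 1 := by
  rw [expI_neg, expI_mul, show s + -s = 0 by ring]
  simp

lemma expI_cancel' (s : ℝ) :
    Complex.exp (-(Complex.I * (s:ℝ))) * Complex.exp (Complex.I * (s:ℝ)) = 1 := by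
  rw [mul_comm]; exact expI_cancel s

lemma magOp_old_transfer (A : DEdge (n+1) → ℝ) (A' : DEdge n → ℝ) (β : ℝ)
    (hcomp : ∀ w : DEdge n,
      (cellFlux A w = 4 * β ∨ cellFlux A w = -(4 * β)) ∧ traceForm A w = A' w)
    (F : DVtx (n+1) → ℂ) (G : DVtx n → ℂ) (c : ℂ)
    (hold : ∀ y, F (oldV y) = G y)
    (hnewF : ∀ w, F (newV (w, false)) =
      c * (Complex.exp (-(Complex.I * A (Fin.snoc w 0))) * G (dsrc n w)
        + Complex.exp (Complex.I * A (Fin.snoc w 1)) * G (dtgt n w)))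
    (hnewT : ∀ w, F (newV (w, true)) =
      c * (Complex.exp (-(Complex.I * A (Fin.snoc w 2))) * G (dtgt n w)
        + Complex.exp (Complex.I * A (Fin.snoc w 3)) * G (dsrc n w)))
    (x : DVtx n) :
    magOp (n+1) A F (oldV x)
      = (1 - c) * G x - c * ((Real.cos (2*β) : ℝ) : ℂ) * (G x - magOp n A' G x) := by
  set CB : ℂ := ((Real.cos (2*β) : ℝ) : ℂ) with hCB
  have hflux : ∀ w : DEdge n,
      (A (Fin.snoc w 0) + A (Fin.snoc w 1)) + (A (Fin.snoc w 2) + A (Fin.snoc w 3)) = 4*β ∨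
      (A (Fin.snoc w 0) + A (Fin.snoc w 1)) + (A (Fin.snoc w 2) + A (Fin.snoc w 3)) = -(4*β) := by
    intro w
    have h := (hcomp w).1
    unfold cellFlux at h
    rcases h with h | h
    · exact Or.inl (by linarith)
    · exact Or.inr (by linarith)
  have htr : ∀ w : DEdge n,
      (1/2) * ((A (Fin.snoc w 0) + A (Fin.snoc w 1)) - (A (Fin.snoc w 2) + A (Fin.snoc w 3)))
        = A' w := by
    intro w
    have h := (hcomp w).2
    unfold traceForm at h
    linarith
  have h5 : ∀ w : DEdge n,
      Complex.exp (Complex.I * ((A (Fin.snoc w 0) + A (Fin.snoc w 1) : ℝ) : ℂ))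
        + Complex.exp (-(Complex.I * ((A (Fin.snoc w 2) + A (Fin.snoc w 3) : ℝ) : ℂ)))
      = 2 * CB * Complex.exp (Complex.I * (A' w : ℝ)) := fun w =>
    cell_exp _ _ β (A' w) (hflux w) (htr w)
  have h5' : ∀ w : DEdge n,
      Complex.exp (-(Complex.I * ((A (Fin.snoc w 0) + A (Fin.snoc w 1) : ℝ) : ℂ)))
        + Complex.exp (Complex.I * ((A (Fin.snoc w 2) + A (Fin.snoc w 3) : ℝ) : ℂ))
      = 2 * CB * Complex.exp (-(Complex.I * (A' w : ℝ))) := fun w =>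
    cell_exp' _ _ β (A' w) (hflux w) (htr w)
  have cellS : ∀ w : DEdge n,
      Complex.exp (Complex.I * A (Fin.snoc w 0)) * F (newV (w, false))
        + Complex.exp (-(Complex.I * A (Fin.snoc w 3))) * F (newV (w, true))
      = 2*c*G (dsrc n w) + 2*c*CB * Complex.exp (Complex.I * (A' w : ℝ)) * G (dtgt n w) := by
    intro w
    rw [hnewF w, hnewT w]
    have h1 := expI_cancel (A (Fin.snoc w 0))
    have h4 := expI_cancel' (A (Fin.snoc w 3))
    have h2 := expI_mul (A (Fin.snoc w 0)) (A (Fin.snoc w 1))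
    have h3 : Complex.exp (-(Complex.I * A (Fin.snoc w 3)))
        * Complex.exp (-(Complex.I * A (Fin.snoc w 2)))
        = Complex.exp (-(Complex.I * ((A (Fin.snoc w 2) + A (Fin.snoc w 3) : ℝ) : ℂ))) := by
      rw [expI_neg (A (Fin.snoc w 3)), expI_neg (A (Fin.snoc w 2)), expI_mul,
        show -A (Fin.snoc w 3) + -A (Fin.snoc w 2) = -(A (Fin.snoc w 2) + A (Fin.snoc w 3)) by ring,
        ← expI_neg]
    linear_combination c * G (dsrc n w) * h1 + c * G (dtgt n w) * h2
      + c * G (dtgt n w) * h3 + c * G (dsrc n w) * h4 + c * G (dtgt n w) * h5 w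
  have cellT : ∀ w : DEdge n,
      Complex.exp (-(Complex.I * A (Fin.snoc w 1))) * F (newV (w, false))
        + Complex.exp (Complex.I * A (Fin.snoc w 2)) * F (newV (w, true))
      = 2*c*G (dtgt n w) + 2*c*CB * Complex.exp (-(Complex.I * (A' w : ℝ))) * G (dsrc n w) := by
    intro w
    rw [hnewF w, hnewT w]
    have h1 := expI_cancel' (A (Fin.snoc w 1))
    have h4 := expI_cancel (A (Fin.snoc w 2))
    have h2 : Complex.exp (-(Complex.I * A (Fin.snoc w 1)))
        * Complex.exp (-(Complex.I * A (Fin.snoc w 0)))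
        = Complex.exp (-(Complex.I * ((A (Fin.snoc w 0) + A (Fin.snoc w 1) : ℝ) : ℂ))) := by
      rw [expI_neg (A (Fin.snoc w 1)), expI_neg (A (Fin.snoc w 0)), expI_mul,
        show -A (Fin.snoc w 1) + -A (Fin.snoc w 0) = -(A (Fin.snoc w 0) + A (Fin.snoc w 1)) by ring,
        ← expI_neg]
    have h3 := expI_mul (A (Fin.snoc w 2)) (A (Fin.snoc w 3))
    linear_combination c * G (dsrc n w) * h2 + c * G (dtgt n w) * h1
      + c * G (dtgt n w) * h4 + c * G (dsrc n w) * h3 + c * G (dsrc n w) * h5' w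
  -- now the main computation
  have hd0 : (ddeg n x : ℂ) ≠ 0 := by
    have := ddeg_pos n x
    have h1 : ddeg n x ≠ 0 := by omega
    exact_mod_cast h1
  have hmag : (ddeg n x : ℂ) * magOp n A' G x
      = ∑ w : DEdge n,
        ((if dsrc n w = x then G x - Complex.exp (Complex.I * (A' w : ℝ)) * G (dtgt n w) else 0) +
         (if dtgt n w = x then G x - Complex.exp (-(Complex.I * (A' w : ℝ))) * G (dsrc n w) else 0)) := by
    unfold magOp
    rw [← Finset.sum_add_distrib, ← mul_assoc, mul_inv_cancel₀ hd0, one_mul]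
  rw [magOp_old_raw]
  simp only [hold]
  have hsum : (∑ w : DEdge n,
      ((if dsrc n w = x then
          (2 * G x - Complex.exp (Complex.I * A (Fin.snoc w 0)) * F (newV (w, false))
            - Complex.exp (-(Complex.I * A (Fin.snoc w 3))) * F (newV (w, true))) else 0) +
       (if dtgt n w = x then
          (2 * G x - Complex.exp (-(Complex.I * A (Fin.snoc w 1))) * F (newV (w, false))
            - Complex.exp (Complex.I * A (Fin.snoc w 2))  * F (newV (w, true))) else 0)))
      = ∑ w : DEdge n,
        (((if dsrc n w = x then (1:ℂ) else 0) + (if dtgt n w = x then (1:ℂ) else 0))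
            * ((2 - 2*c - 2*c*CB) * G x)
          + 2*c*CB *
            ((if dsrc n w = x then G x - Complex.exp (Complex.I * (A' w : ℝ)) * G (dtgt n w) else 0) +
             (if dtgt n w = x then G x - Complex.exp (-(Complex.I * (A' w : ℝ))) * G (dsrc n w) else 0))) := by
    refine Finset.sum_congr rfl fun w _ => ?_
    have hS := cellS w
    have hT := cellT w
    by_cases hs : dsrc n w = x <;> by_cases ht : dtgt n w = x
    · rw [hs] at hS hT; rw [ht] at hS hT
      simp only [hs, ht, if_true]
      linear_combination (-1 : ℂ) * hS + (-1 : ℂ) * hT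
    · rw [hs] at hS hT
      simp only [hs, ht, if_true, if_false]
      linear_combination (-1 : ℂ) * hS
    · rw [ht] at hS hT
      simp only [hs, ht, if_true, if_false]
      linear_combination (-1 : ℂ) * hT
    · simp only [hs, ht, if_false]
      ring
  rw [hsum, Finset.sum_add_distrib, ← Finset.sum_mul, ← ddeg_eq_sum, ← Finset.mul_sum, ← hmag]
  field_simp
  ring
end Transfer

section Counting
variable {n : ℕ}

lemma card_DVtx_succ : Fintype.card (DVtx (n+1)) = Fintype.card (DVtx n) + 2 * 4 ^ n := by
  show Fintype.card (DVtx n ⊕ (DEdge n × Bool)) = _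
  rw [Fintype.card_sum, Fintype.card_prod, Fintype.card_bool, Fintype.card_fun,
    Fintype.card_fin, Fintype.card_fin]
  ring

lemma card_DVtx_lt : ∀ n : ℕ, Fintype.card (DVtx n) < 2 * 4 ^ n + 2
  | 0 => by
    show Fintype.card Bool < _
    rw [Fintype.card_bool]; norm_num
  | n + 1 => by
    have := card_DVtx_lt n
    rw [card_DVtx_succ]
    have h4 : (4:ℕ)^n ≥ 1 := Nat.one_le_pow _ _ (by norm_num)
    calc Fintype.card (DVtx n) + 2 * 4 ^ n < 2 * 4 ^ n + 2 + 2 * 4 ^ n := by omega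
      _ ≤ 2 * 4 ^ (n+1) + 2 := by ring_nf; omega

lemma base_injective : ∀ n : ℕ, base n false ≠ base n true
  | 0 => by simp [base]; exact Bool.false_ne_true
  | n + 1 => by
    intro h
    exact base_injective n (oldV_inj h)

lemma card_nonbase (n : ℕ) :
    Fintype.card {x : DVtx n // ∀ b, x ≠ base n b} = Fintype.card (DVtx n) - 2 := by
  classical
  rw [Fintype.card_subtype]
  have hfe : (Finset.univ.filter fun x : DVtx n => ∀ b, x ≠ base n b)
      = Finset.univ \ {base n false, base n true} := by
    ext x
    simp only [Finset.mem_filter, Finset.mem_univ, true_and, Finset.mem_sdiff,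
      Finset.mem_insert, Finset.mem_singleton]
    constructor
    · intro h hc
      rcases hc with hc | hc
      · exact h false hc
      · exact h true hc
    · intro h b hc
      cases b
      · exact h (Or.inl hc)
      · exact h (Or.inr hc)
  rw [hfe, Finset.card_sdiff_of_subset (by simp), Finset.card_univ]
  congr 1
  rw [Finset.card_insert_of_notMem (by simp [base_injective n]), Finset.card_singleton]
end Counting

section OneEigen
variable {n : ℕ}

/-- `1` is always an eigenvalue of the Dirichlet operator at scale `n+1`. -/
lemma one_hasEigenvalue (A : DEdge (n+1) → ℝ) :
    Module.End.HasEigenvalue (Matrix.toLin' (dirMat (n+1) A)) 1 := by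
  classical
  -- the constraint matrix
  set C : Matrix {x : DVtx n // ∀ b, x ≠ base n b} (DEdge n × Bool) ℂ :=
    Matrix.of (fun x p =>
      if p.2 then
        (if dsrc n p.1 = x.1 then Complex.exp (-(Complex.I * A (Fin.snoc p.1 3))) else 0) +
        (if dtgt n p.1 = x.1 then Complex.exp (Complex.I * A (Fin.snoc p.1 2)) else 0)
      else
        (if dsrc n p.1 = x.1 then Complex.exp (Complex.I * A (Fin.snoc p.1 0)) else 0) +
        (if dtgt n p.1 = x.1 then Complex.exp (-(Complex.I * A (Fin.snoc p.1 1))) else 0))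
    with hC
  have hnotinj : ¬ Function.Injective C.mulVecLin := by
    intro hinj
    have hle := LinearMap.finrank_le_finrank_of_injective hinj
    rw [Module.finrank_pi, Module.finrank_pi, Fintype.card_prod, Fintype.card_bool,
      Fintype.card_fun, Fintype.card_fin, Fintype.card_fin, card_nonbase] at hle
    have h1 := card_DVtx_lt n
    have h4 : (1:ℕ) ≤ 4 ^ n := Nat.one_le_pow _ _ (by norm_num)
    set m4 := 4 ^ n with hm4
    omega
  rw [← LinearMap.ker_eq_bot] at hnotinj
  obtain ⟨h, hker, hh0⟩ := Submodule.exists_mem_ne_zero_of_ne_bot hnotinj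
  have hCh : C.mulVec h = 0 := hker
  -- build the eigenfunction
  rw [eig_iff]
  refine ⟨Sum.elim (fun _ => 0) h, ?_, ?_, ?_⟩
  · intro hc
    apply hh0
    funext p
    exact congrFun hc (Sum.inr p)
  · intro b; rfl
  · intro x hx
    match x with
    | Sum.inl y =>
      have hy : ∀ b, y ≠ base n b := fun b hc => hx b (by rw [base_succ, hc]; rfl)
      have hF : ∀ v : DVtx n, (Sum.elim (fun _ => (0:ℂ)) h : DVtx (n+1) → ℂ) (oldV v) = 0 :=
        fun v => rfl
      rw [show (Sum.inl y : DVtx (n+1)) = oldV y from rfl, magOp_old_raw A (Sum.elim (fun _ => (0:ℂ)) h) y]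
      have key : ∀ w : DEdge n,
          ((if dsrc n w = y then
              (2 * (Sum.elim (fun _ => (0:ℂ)) h) (oldV y)
                - Complex.exp (Complex.I * A (Fin.snoc w 0)) * (Sum.elim (fun _ => (0:ℂ)) h) (newV (w, false))
                - Complex.exp (-(Complex.I * A (Fin.snoc w 3))) * (Sum.elim (fun _ => (0:ℂ)) h) (newV (w, true))) else 0) +
           (if dtgt n w = y then
              (2 * (Sum.elim (fun _ => (0:ℂ)) h) (oldV y)
                - Complex.exp (-(Complex.I * A (Fin.snoc w 1))) * (Sum.elim (fun _ => (0:ℂ)) h) (newV (w, false))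
                - Complex.exp (Complex.I * A (Fin.snoc w 2)) * (Sum.elim (fun _ => (0:ℂ)) h) (newV (w, true))) else 0))
          = -(C ⟨y, hy⟩ (w, false) * h (w, false) + C ⟨y, hy⟩ (w, true) * h (w, true)) := by
        intro w
        show _ = -((((if dsrc n w = y then Complex.exp (Complex.I * A (Fin.snoc w 0)) else 0) +
            (if dtgt n w = y then Complex.exp (-(Complex.I * A (Fin.snoc w 1))) else 0)) * h (w, false)) +
          (((if dsrc n w = y then Complex.exp (-(Complex.I * A (Fin.snoc w 3))) else 0) +
            (if dtgt n w = y then Complex.exp (Complex.I * A (Fin.snoc w 2)) else 0)) * h (w, true)))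
        by_cases hs : dsrc n w = y <;> by_cases ht : dtgt n w = y <;>
          simp only [hs, ht, if_true, if_false, Sum.elim_inl, Sum.elim_inr, oldV, newV] <;> ring
      rw [Finset.sum_congr rfl fun w _ => key w]
      have hsum : (∑ w : DEdge n, -(C ⟨y, hy⟩ (w, false) * h (w, false) + C ⟨y, hy⟩ (w, true) * h (w, true)))
          = -(C.mulVec h ⟨y, hy⟩) := by
        rw [Finset.sum_neg_distrib]
        congr 1
        show _ = ∑ p : DEdge n × Bool, C ⟨y, hy⟩ p * h p
        rw [Fintype.sum_prod_type]
        refine Finset.sum_congr rfl fun w _ => ?_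
        rw [Fintype.sum_bool]
        ring
      rw [hsum, hCh]
      simp [oldV]
    | Sum.inr p =>
      obtain ⟨w, b⟩ := p
      match b with
      | false =>
        rw [show (Sum.inr (w, false) : DVtx (n+1)) = newV (w, false) from rfl, magOp_newF A (Sum.elim (fun _ => (0:ℂ)) h) w]
        show Sum.elim _ h (newV (w, false)) - 1/2 * (_ * (0:ℂ) + _ * (0:ℂ)) = _
        ring
      | true =>
        rw [show (Sum.inr (w, true) : DVtx (n+1)) = newV (w, true) from rfl, magOp_newT A (Sum.elim (fun _ => (0:ℂ)) h) w]
        show Sum.elim _ h (newV (w, true)) - 1/2 * (_ * (0:ℂ) + _ * (0:ℂ)) = _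
        ring
end OneEigen

section Final

lemma scalar_key (z CB : ℂ) (hz : (1:ℂ) - z ≠ 0) (hCB : CB ≠ 0) :
    (1 - (2*((1:ℂ)-z))⁻¹) - (2*((1:ℂ)-z))⁻¹ * CB * (1 - (-2*z^2+4*z-1+CB)/CB) = z := by
  field_simp
  ring

lemma spec_one_level (A : DEdge 1 → ℝ) :
    {z : ℂ | Module.End.HasEigenvalue (Matrix.toLin' (dirMat 1 A)) z} = {(1 : ℂ)} := by
  ext z
  simp only [Set.mem_setOf_eq, Set.mem_singleton_iff]
  constructor
  · intro hz
    rw [eig_iff] at hz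
    obtain ⟨F, hF0, hFb, hFe⟩ := hz
    obtain ⟨v, hv⟩ := Function.ne_iff.1 hF0
    have hv' : F v ≠ 0 := by simpa using hv
    have hvnb : ∀ b, v ≠ base 1 b := by
      intro b hc
      exact hv' (by rw [hc]; exact hFb b)
    have heq := hFe v hvnb
    have hmag : magOp 1 A F v = F v := by
      match v with
      | Sum.inl y => exact absurd rfl (hvnb y)
      | Sum.inr (w, b) =>
        match b with
        | false =>
          rw [show (Sum.inr (w,false) : DVtx 1) = newV (w,false) from rfl, magOp_newF]
          have h1 : F (oldV (dtgt 0 w)) = 0 := hFb (dtgt 0 w)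
          have h2 : F (oldV (dsrc 0 w)) = 0 := hFb (dsrc 0 w)
          rw [h1, h2]; ring
        | true =>
          rw [show (Sum.inr (w,true) : DVtx 1) = newV (w,true) from rfl, magOp_newT]
          have h1 : F (oldV (dtgt 0 w)) = 0 := hFb (dtgt 0 w)
          have h2 : F (oldV (dsrc 0 w)) = 0 := hFb (dsrc 0 w)
          rw [h1, h2]; ring
    rw [hmag] at heq
    have : (z - 1) * F v = 0 := by linear_combination -heq
    rcases mul_eq_zero.1 this with h | h
    · exact sub_eq_zero.1 h
    · exact absurd h hv'
  · intro h
    subst h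
    exact one_hasEigenvalue A

end Final

/-- For `m = k+2 ≥ 2` with `cos 2β_m ≠ 0`, the spectrum of the Dirichlet magnetic
operator `D_m` equals `{1} ∪ R_m⁻¹(spectrum of D_{m−1})`; moreover the spectrum of `D_1`
is `{1}`. -/
theorem stmt11 (βs : ℕ → ℝ) (a : (m : ℕ) → DEdge m → ℝ) (hcomp : Compatible βs a)
    (k : ℕ) (hβ : Real.cos (2 * βs (k + 2)) ≠ 0) :
    {z : ℂ | Module.End.HasEigenvalue (Matrix.toLin' (dirMat (k + 2) (a (k + 2)))) z} =
      {(1 : ℂ)} ∪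
        {z : ℂ | Module.End.HasEigenvalue (Matrix.toLin' (dirMat (k + 1) (a (k + 1))))
          ((-2 * z ^ 2 + 4 * z - 1 + ((Real.cos (2 * βs (k + 2)) : ℝ) : ℂ)) /
            ((Real.cos (2 * βs (k + 2)) : ℝ) : ℂ))} ∧
    {z : ℂ | Module.End.HasEigenvalue (Matrix.toLin' (dirMat 1 (a 1))) z} = {(1 : ℂ)} := by
  constructor
  · set CB : ℂ := ((Real.cos (2 * βs (k + 2)) : ℝ) : ℂ) with hCBdef
    have hCB0 : CB ≠ 0 := by
      rw [hCBdef]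
      exact Complex.ofReal_ne_zero.2 hβ
    have hcompat : ∀ w : DEdge (k+1),
        (cellFlux (a (k+2)) w = 4 * βs (k+2) ∨ cellFlux (a (k+2)) w = -(4 * βs (k+2))) ∧
        traceForm (a (k+2)) w = a (k+1) w := hcomp (k+1)
    ext z
    simp only [Set.mem_setOf_eq, Set.mem_union, Set.mem_singleton_iff]
    constructor
    · intro hz
      by_cases hz1 : z = 1
      · exact Or.inl hz1
      right
      have hz1' : (1:ℂ) - z ≠ 0 := sub_ne_zero_of_ne (Ne.symm hz1)
      have h2z : (2:ℂ) * (1 - z) ≠ 0 := mul_ne_zero two_ne_zero hz1'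
      set c : ℂ := (2*((1:ℂ)-z))⁻¹ with hcdef
      rw [eig_iff] at hz ⊢
      obtain ⟨F, hF0, hFb, hFe⟩ := hz
      set G : DVtx (k+1) → ℂ := fun y => F (oldV y) with hGdef
      have hold : ∀ y, F (oldV y) = G y := fun y => rfl
      have hnewF : ∀ w, F (newV (w, false)) =
          c * (Complex.exp (-(Complex.I * a (k+2) (Fin.snoc w 0))) * G (dsrc (k+1) w)
            + Complex.exp (Complex.I * a (k+2) (Fin.snoc w 1)) * G (dtgt (k+1) w)) := by
        intro w
        have heq := hFe (newV (w, false)) (newV_ne_base _)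
        rw [magOp_newF] at heq
        simp only [hold] at heq
        rw [hcdef, inv_mul_eq_div, eq_div_iff h2z]
        linear_combination 2 * heq
      have hnewT : ∀ w, F (newV (w, true)) =
          c * (Complex.exp (-(Complex.I * a (k+2) (Fin.snoc w 2))) * G (dtgt (k+1) w)
            + Complex.exp (Complex.I * a (k+2) (Fin.snoc w 3)) * G (dsrc (k+1) w)) := by
        intro w
        have heq := hFe (newV (w, true)) (newV_ne_base _)
        rw [magOp_newT] at heq
        simp only [hold] at heq
        rw [hcdef, inv_mul_eq_div, eq_div_iff h2z]
        linear_combination 2 * heq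
      refine ⟨G, ?_, ?_, ?_⟩
      · intro hG
        apply hF0
        funext v
        match v with
        | Sum.inl y =>
          have := hold y
          rw [hG] at this
          exact this
        | Sum.inr (w, b) =>
          match b with
          | false => rw [show (Sum.inr (w,false) : DVtx (k+2)) = newV (w,false) from rfl,
              hnewF w, hG]; simp
          | true => rw [show (Sum.inr (w,true) : DVtx (k+2)) = newV (w,true) from rfl,
              hnewT w, hG]; simp
      · intro b; exact hFb b
      · intro x hx
        have hxo : ∀ b, oldV x ≠ base (k+2) b := fun b hc =>
          hx b (oldV_inj (by rw [base_succ] at hc; exact hc))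
        have heq := hFe (oldV x) hxo
        rw [magOp_old_transfer (a (k+2)) (a (k+1)) (βs (k+2)) hcompat F G c hold hnewF hnewT x,
          hold x] at heq
        have hsc := scalar_key z CB hz1' hCB0
        rw [← hcdef] at hsc
        have hccb : c * CB ≠ 0 := mul_ne_zero (by rw [hcdef]; exact inv_ne_zero h2z) hCB0
        apply mul_left_cancel₀ hccb
        linear_combination heq - hsc * G x
    · intro hz
      have h1ev : z = 1 → Module.End.HasEigenvalue (Matrix.toLin' (dirMat (k + 2) (a (k + 2)))) z :=
        fun h => h ▸ one_hasEigenvalue (a (k+2))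
      rcases hz with hz1 | hlam
      · exact h1ev hz1
      by_cases hz1 : z = 1
      · exact h1ev hz1
      have hz1' : (1:ℂ) - z ≠ 0 := sub_ne_zero_of_ne (Ne.symm hz1)
      have h2z : (2:ℂ) * (1 - z) ≠ 0 := mul_ne_zero two_ne_zero hz1'
      set c : ℂ := (2*((1:ℂ)-z))⁻¹ with hcdef
      rw [eig_iff] at hlam ⊢
      obtain ⟨G, hG0, hGb, hGe⟩ := hlam
      set F : DVtx (k+2) → ℂ := Sum.elim G (fun p =>
        if p.2 then
          c * (Complex.exp (-(Complex.I * a (k+2) (Fin.snoc p.1 2))) * G (dtgt (k+1) p.1)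
            + Complex.exp (Complex.I * a (k+2) (Fin.snoc p.1 3)) * G (dsrc (k+1) p.1))
        else
          c * (Complex.exp (-(Complex.I * a (k+2) (Fin.snoc p.1 0))) * G (dsrc (k+1) p.1)
            + Complex.exp (Complex.I * a (k+2) (Fin.snoc p.1 1)) * G (dtgt (k+1) p.1)))
        with hFdef
      have hold : ∀ y, F (oldV y) = G y := fun y => rfl
      have hnewF : ∀ w, F (newV (w, false)) =
          c * (Complex.exp (-(Complex.I * a (k+2) (Fin.snoc w 0))) * G (dsrc (k+1) w)
            + Complex.exp (Complex.I * a (k+2) (Fin.snoc w 1)) * G (dtgt (k+1) w)) :=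
        fun w => rfl
      have hnewT : ∀ w, F (newV (w, true)) =
          c * (Complex.exp (-(Complex.I * a (k+2) (Fin.snoc w 2))) * G (dtgt (k+1) w)
            + Complex.exp (Complex.I * a (k+2) (Fin.snoc w 3)) * G (dsrc (k+1) w)) :=
        fun w => rfl
      have hhalf : (1 - z) * c = 1/2 := by
        rw [hcdef]
        field_simp
      refine ⟨F, ?_, ?_, ?_⟩
      · intro hF
        apply hG0
        funext y
        have := hold y
        rw [hF] at this
        exact this.symm
      · intro b
        rw [base_succ]
        exact hGb b
      · intro x hx
        match x with
        | Sum.inl y =>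
          have hy : ∀ b, y ≠ base (k+1) b := fun b hc => hx b (by rw [base_succ, hc]; rfl)
          rw [show (Sum.inl y : DVtx (k+2)) = oldV y from rfl,
            magOp_old_transfer (a (k+2)) (a (k+1)) (βs (k+2)) hcompat F G c hold hnewF hnewT y,
            hold y, hGe y hy]
          have hsc := scalar_key z CB hz1' hCB0
          rw [← hcdef] at hsc
          linear_combination hsc * G y
        | Sum.inr (w, b) =>
          match b with
          | false =>
            rw [show (Sum.inr (w,false) : DVtx (k+2)) = newV (w,false) from rfl, magOp_newF]
            simp only [hold, hnewF]
            linear_combination hhalf *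
              (Complex.exp (-(Complex.I * a (k+2) (Fin.snoc w 0))) * G (dsrc (k+1) w)
                + Complex.exp (Complex.I * a (k+2) (Fin.snoc w 1)) * G (dtgt (k+1) w))
          | true =>
            rw [show (Sum.inr (w,true) : DVtx (k+2)) = newV (w,true) from rfl, magOp_newT]
            simp only [hold, hnewT]
            linear_combination hhalf *
              (Complex.exp (-(Complex.I * a (k+2) (Fin.snoc w 2))) * G (dtgt (k+1) w)
                + Complex.exp (Complex.I * a (k+2) (Fin.snoc w 3)) * G (dsrc (k+1) w))
  · exact spec_one_level (a 1)
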